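/- Let D ⊆ ℂ^N be a convex domain containing no complex affine line. Then for every m ≥ 1, every holomorphic map f : ℂ^m → ℂ^N with f(ℂ^m) ⊆ D is constant. -/

import Mathlib

open Complex Set Bornology

/-- A convex domain in `ℂ^N`: a nonempty open convex subset. -/
def IsConvexDomain {N : ℕ} (D : Set (Fin N → ℂ)) : Prop :=
  IsOpen D ∧ Convex ℝ D ∧ D.Nonempty

/-- `S` contains a complex affine line `{p + ζ • v : ζ ∈ ℂ}` with `v ≠ 0`. -/
def ContainsComplexLine {E : Type*} [AddCommGroup E] [Module ℂ E] (S : Set E) : Prop :=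
  ∃ p v : E, v ≠ 0 ∧ ∀ ζ : ℂ, p + ζ • v ∈ S

/-- Liouville-type theorem: an entire function with real part bounded above is constant. -/
lemma liouville_re_bounded {φ : ℂ → ℂ} (hφ : Differentiable ℂ φ) {c : ℝ}
    (h : ∀ ζ, (φ ζ).re ≤ c) (x y : ℂ) : φ x = φ y := by
  have hg : Differentiable ℂ (fun ζ => Complex.exp (φ ζ)) := hφ.cexp
  have hb : IsBounded (Set.range fun ζ => Complex.exp (φ ζ)) := by
    refine isBounded_iff_forall_norm_le.2 ⟨Real.exp c, ?_⟩
    rintro _ ⟨ζ, rfl⟩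
    rw [Complex.norm_exp]
    exact Real.exp_le_exp.2 (h ζ)
  have hconst := hg.apply_eq_apply_of_bounded hb
  have hderiv : ∀ ζ, deriv φ ζ = 0 := by
    intro ζ
    have h1 : deriv (fun ζ => Complex.exp (φ ζ)) ζ = Complex.exp (φ ζ) * deriv φ ζ :=
      deriv_cexp (hφ ζ)
    have h2 : deriv (fun ζ => Complex.exp (φ ζ)) ζ = 0 := by
      have heq : (fun ζ => Complex.exp (φ ζ)) = fun _ => Complex.exp (φ 0) :=
        funext fun w => hconst w 0
      rw [heq]; exact deriv_const _ _
    rw [h2] at h1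
    exact (mul_eq_zero.1 h1.symm).resolve_left (Complex.exp_ne_zero _)
  exact is_const_of_deriv_eq_zero hφ hderiv x y

lemma complex_smul_decomp {N : ℕ} (c : ℂ) (w : Fin N → ℂ) :
    c • w = (c.re : ℝ) • w + (c.im : ℝ) • (Complex.I • w) := by
  funext i
  show c * w i = (c.re : ℝ) • w i + (c.im : ℝ) • (Complex.I * w i)
  rw [Complex.real_smul, Complex.real_smul]
  conv_lhs => rw [← Complex.re_add_im c]
  ring

/-- implication (6) ⇒ (5) of Theorem 1.1, in several variables:
if `D ⊆ ℂ^N` is a convex domain containing no complex affine line, then for every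
`m ≥ 1`, every holomorphic map `f : ℂ^m → ℂ^N` with image in `D` is constant. -/
theorem entire_maps_constant {N : ℕ} (D : Set (Fin N → ℂ)) (hD : IsConvexDomain D)
    (hline : ¬ ContainsComplexLine D) :
    ∀ m : ℕ, 1 ≤ m → ∀ f : (Fin m → ℂ) → (Fin N → ℂ), Differentiable ℂ f →
      (∀ z, f z ∈ D) → ∀ z z' : Fin m → ℂ, f z = f z' := by
  obtain ⟨hopen, hconv, -⟩ := hD
  intro m _ f hf hfD z z'
  by_contra hne
  -- the entire curve through the two values
  set g : ℂ → (Fin N → ℂ) := fun ζ => f (z + ζ • (z' - z)) with hg_def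
  have hg : Differentiable ℂ g :=
    hf.comp (((differentiable_id.smul_const (z' - z))).const_add z)
  have hg0 : g 0 = f z := by simp [hg_def]
  have hg1 : g 1 = f z' := by simp [hg_def]
  set p : Fin N → ℂ := f z
  set v : Fin N → ℂ := f z' - f z with hv_def
  have hv : v ≠ 0 := sub_ne_zero.2 (Ne.symm hne)
  -- D contains no line, so some point of the line p + ζ v is outside D
  have hex : ∃ ζ0 : ℂ, p + ζ0 • v ∉ D := by
    by_contra hall
    push_neg at hall
    exact hline ⟨p, v, hv, hall⟩
  obtain ⟨ζ0, hζ0⟩ := hex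
  -- separate it from D
  obtain ⟨ℓ, hℓ⟩ := geometric_hahn_banach_open_point hconv hopen hζ0
  set q : Fin N → ℂ := p + ζ0 • v
  -- complexify ℓ
  set φ : ℂ → ℂ := fun ζ => (ℓ (g ζ) : ℂ) - Complex.I * (ℓ (Complex.I • g ζ) : ℂ) with hφ_def
  -- φ is entire: it is a ℂ-linear functional composed with g
  have key : ∀ w : Fin N → ℂ, ∀ c : ℂ,
      (ℓ (c • w) : ℂ) - Complex.I * (ℓ (Complex.I • (c • w)) : ℂ)
        = c * ((ℓ w : ℂ) - Complex.I * (ℓ (Complex.I • w) : ℂ)) := by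
    intro w c
    have h1 : ℓ (c • w) = c.re * ℓ w + c.im * ℓ (Complex.I • w) := by
      rw [complex_smul_decomp]
      simp [smul_eq_mul]
    have hIc : Complex.I • c • w = c • (Complex.I • w) := smul_comm _ _ _
    have hII : Complex.I • (Complex.I • w) = -w := by
      rw [smul_smul, Complex.I_mul_I, neg_smul, one_smul]
    have h2 : ℓ (Complex.I • (c • w)) = c.re * ℓ (Complex.I • w) - c.im * ℓ w := by
      rw [hIc, complex_smul_decomp]
      simp [hII, smul_eq_mul]
      ring
    rw [h1, h2]
    push_cast
    conv_rhs => rw [← Complex.re_add_im c]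
    linear_combination ((c.im : ℂ) * (ℓ (Complex.I • w) : ℂ)) * Complex.I_sq
  have hL : Differentiable ℂ φ := by
    -- build the ℂ-linear map
    let L : (Fin N → ℂ) →ₗ[ℂ] ℂ :=
      { toFun := fun w => (ℓ w : ℂ) - Complex.I * (ℓ (Complex.I • w) : ℂ)
        map_add' := by
          intro a b
          simp [smul_add]
          ring
        map_smul' := by
          intro c w
          simpa using key w c }
    have : φ = (L.toContinuousLinearMap : (Fin N → ℂ) → ℂ) ∘ g := rfl
    rw [this]
    exact L.toContinuousLinearMap.differentiable.comp hg
  -- real part of φ is bounded above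
  have hre : ∀ ζ, (φ ζ).re ≤ ℓ q := by
    intro ζ
    have : (φ ζ).re = ℓ (g ζ) := by
      simp [hφ_def, Complex.sub_re, Complex.mul_re]
    rw [this]
    exact (hℓ _ (hfD _)).le
  -- Liouville: φ is constant
  have hc := liouville_re_bounded hL hre 1 0
  -- hence ℓ v = 0 and ℓ (I • v) = 0
  have hφeq : (ℓ (f z') : ℂ) - Complex.I * (ℓ (Complex.I • f z') : ℂ)
      = (ℓ (f z) : ℂ) - Complex.I * (ℓ (Complex.I • f z) : ℂ) := by
    simpa [hφ_def, hg0, hg1] using hc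
  have hv1 : ℓ v = 0 ∧ ℓ (Complex.I • v) = 0 := by
    have hre' := congrArg Complex.re hφeq
    have him' := congrArg Complex.im hφeq
    simp [Complex.sub_re, Complex.mul_re, Complex.sub_im, Complex.mul_im] at hre' him'
    constructor
    · rw [hv_def, map_sub, hre']; ring
    · rw [hv_def, smul_sub, map_sub]
      rw [him']; ring
  -- but then ℓ q = ℓ p, contradicting separation
  have hq : ℓ q = ℓ p := by
    have : ℓ q = ℓ p + ζ0.re * ℓ v + ζ0.im * ℓ (Complex.I • v) := by
      show ℓ (p + ζ0 • v) = _
      rw [complex_smul_decomp]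
      simp [smul_eq_mul]
      ring
    rw [this, hv1.1, hv1.2]; ring
  have := hℓ p (hfD z)
  rw [hq] at this
  exact lt_irrefl _ this
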